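/- Resonance function bound on the counterexample frequency set: Define χ(ξ, ξ₁, η, η₁) = 3ξξ₁(ξ-ξ₁) + (ηξ₁ - η₁ξ)² / (ξξ₁(ξ-ξ₁)) for ξ, ξ₁, ξ-ξ₁ all nonzero. For N > 0 let D_{1,N} = [N/2, N] × [-6N², 6N²] and D_{2,N} = [N, 2N] × [√3 N², (√3+1) N²], and for (ξ,η) ∈ ℝ² let k(ξ,η) be the set of (ξ₁,η₁) ∈ ℝ² such that either ((ξ₁,η₁) ∈ D_{2,N} and (ξ-ξ₁, η-η₁) ∈ D_{1,N}) or ((ξ₁,η₁) ∈ D_{1,N} and (ξ-ξ₁, η-η₁) ∈ D_{2,N}). Then there exist C > 0 and N₀ > 0 such that for all N ≥ N₀, all (ξ,η) ∈ ℝ², and all (ξ₁,η₁) ∈ k(ξ,η), |χ(ξ, ξ₁, η, η₁)| ≤ C N³. -/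
import Mathlib


open MeasureTheory Filter
open scoped ENNReal NNReal

noncomputable section

/-- Japanese bracket `⟨x⟩ = (1+|x|²)^{1/2}`. -/
def jb (x : ℝ) : ℝ := Real.sqrt (1 + x ^ 2)

/-- KP-II dispersion symbol `P(ξ,η) = ξ³ - η²/ξ`. -/
def Pk (ν : ℝ × ℝ) : ℝ := ν.1 ^ 3 - ν.2 ^ 2 / ν.1

/-- `σ = τ - P(ν)`. -/
def sig (τ : ℝ) (ν : ℝ × ℝ) : ℝ := τ - Pk ν

/-- One-dimensional Fourier transform, with the convention `𝓕g(τ) = ∫ e^{itτ} g(t) dt`. -/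
def fourier1 (g : ℝ → ℂ) (τ : ℝ) : ℂ :=
  ∫ t : ℝ, Complex.exp (Complex.I * Complex.ofReal (t * τ)) * g t

/-- Fourier transform in the time variable of a space-time function which is already
written on the spatial Fourier side; this yields the space-time Fourier transform. -/
def timeFT (u : ℝ → ℝ × ℝ → ℂ) (τ : ℝ) (ν : ℝ × ℝ) : ℂ :=
  fourier1 (fun t => u t ν) τ

/-- Fourier transform in all three variables `(t,x,y) ↦ (τ,ξ,η)`. -/
def ft3 (u : ℝ × ℝ × ℝ → ℂ) (τ : ℝ) (ν : ℝ × ℝ) : ℂ :=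
  ∫ p : ℝ × ℝ × ℝ,
    Complex.exp (Complex.I * Complex.ofReal (p.1 * τ + p.2.1 * ν.1 + p.2.2 * ν.2)) * u p

/-- Inverse Fourier transform in all three variables, applied to a function of `(τ,(ξ,η))`. -/
def invFT3 (F : ℝ → ℝ × ℝ → ℂ) (t : ℝ) (xy : ℝ × ℝ) : ℂ :=
  Complex.ofReal (((2 * Real.pi) ^ 3)⁻¹) *
    ∫ q : ℝ × ℝ × ℝ,
      Complex.exp (-(Complex.I * Complex.ofReal (q.1 * t + q.2.1 * xy.1 + q.2.2 * xy.2))) * F q.1 q.2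

/-- Anisotropic Sobolev `H^{s1,s2}` norm, computed on the (spatial) Fourier side. -/
def HnormE (s1 s2 : ℝ) (f : ℝ × ℝ → ℂ) : ℝ≥0∞ :=
  (∫⁻ ν : ℝ × ℝ,
      ENNReal.ofReal (jb ν.1 ^ (2 * s1) * jb ν.2 ^ (2 * s2)) * (‖f ν‖₊ : ℝ≥0∞) ^ 2) ^ ((1:ℝ)/2)

/-- Weight of the Bourgain space `X^{b,s1,s2}`: `⟨i(τ-P(ν))+ξ²⟩^{2b}⟨ξ⟩^{2s1}⟨η⟩^{2s2}`. -/
def XwE (b s1 s2 : ℝ) (τ : ℝ) (ν : ℝ × ℝ) : ℝ :=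
  (1 + |τ - Pk ν| ^ 2 + ν.1 ^ 4) ^ b * jb ν.1 ^ (2 * s1) * jb ν.2 ^ (2 * s2)

/-- Bourgain `X^{b,s1,s2}` norm of a space-time function written on the spatial Fourier side. -/
def XnormE (b s1 s2 : ℝ) (u : ℝ → ℝ × ℝ → ℂ) : ℝ≥0∞ :=
  (∫⁻ p : ℝ × ℝ × ℝ,
      ENNReal.ofReal (XwE b s1 s2 p.1 p.2) * (‖timeFT u p.1 p.2‖₊ : ℝ≥0∞) ^ 2) ^ ((1:ℝ)/2)

/-- Restricted Bourgain norm `X_T^{b,s1,s2}` (infimum over extensions off `[0,T]`). -/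
def XTnormE (b s1 s2 T : ℝ) (u : ℝ → ℝ × ℝ → ℂ) : ℝ≥0∞ :=
  ⨅ (w : ℝ → ℝ × ℝ → ℂ) (_ : ∀ t ∈ Set.Icc (0:ℝ) T, w t = u t), XnormE b s1 s2 w

/-- Fourier multiplier of the (extended) KPB-II semigroup `W(t)`. -/
def Wmul (t : ℝ) (ν : ℝ × ℝ) : ℂ :=
  Complex.exp (Complex.I * Complex.ofReal (t * Pk ν) - Complex.ofReal (ν.1 ^ 2 * |t|))

/-- Spatial Fourier transform of a product of two functions, expressed as the convolution
of their spatial Fourier transforms. -/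
def prodFT (f g : ℝ × ℝ → ℂ) (ν : ℝ × ℝ) : ℂ :=
  Complex.ofReal (((2 * Real.pi) ^ 2)⁻¹) * ∫ ν₁ : ℝ × ℝ, f ν₁ * g (ν - ν₁)

/-- `∂ₓ(u v)` on the spatial Fourier side. -/
def dxProd (u v : ℝ → ℝ × ℝ → ℂ) (t : ℝ) (ν : ℝ × ℝ) : ℂ :=
  Complex.I * Complex.ofReal ν.1 * prodFT (u t) (v t) ν

/-- `u` solves the Duhamel formulation of the KPB-II equation with data `φ` on `[0,T]`,
with everything written on the spatial Fourier side. -/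
def SolvesDuhamel (φ : ℝ × ℝ → ℂ) (u : ℝ → ℝ × ℝ → ℂ) (T : ℝ) : Prop :=
  ∀ t ∈ Set.Icc (0:ℝ) T, ∀ ν : ℝ × ℝ,
    u t ν = Wmul t ν * φ ν
      - (1/2 : ℂ) * ∫ t' in (0:ℝ)..t, Wmul (t - t') ν * dxProd u u t' ν

/-- `u ∈ C(S; H^{s1,s2})`. -/
def ContH (s1 s2 : ℝ) (S : Set ℝ) (u : ℝ → ℝ × ℝ → ℂ) : Prop :=
  (∀ t ∈ S, HnormE s1 s2 (u t) < ⊤) ∧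
  ∀ t₀ ∈ S, ∀ ε : ℝ, 0 < ε → ∃ δ : ℝ, 0 < δ ∧ ∀ t ∈ S, |t - t₀| < δ →
    HnormE s1 s2 (fun ν => u t ν - u t₀ ν) < ENNReal.ofReal ε

/-- Standard time cutoff: smooth, supported in `[-2,2]`, equal to `1` on `[-1,1]`. -/
def IsCutoff (ψ : ℝ → ℝ) : Prop :=
  ContDiff ℝ (⊤ : ℕ∞) ψ ∧ Function.support ψ ⊆ Set.Icc (-2 : ℝ) 2 ∧
    ∀ t ∈ Set.Icc (-1 : ℝ) 1, ψ t = 1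

/-- The `Y^b_ξ` norm `‖⟨iτ+ξ²⟩^b û(τ)‖_{L²_τ}`. -/
def YnormE (b ξ : ℝ) (u : ℝ → ℂ) : ℝ≥0∞ :=
  (∫⁻ τ : ℝ, ENNReal.ofReal ((1 + τ ^ 2 + ξ ^ 4) ^ b) * (‖fourier1 u τ‖₊ : ℝ≥0∞) ^ 2) ^ ((1:ℝ)/2)

/-- One-dimensional homogeneous Sobolev norm `Ḣ^b`. -/
def HdotE (b : ℝ) (f : ℝ → ℂ) : ℝ≥0∞ :=
  (∫⁻ τ : ℝ, ENNReal.ofReal (|τ| ^ (2 * b)) * (‖fourier1 f τ‖₊ : ℝ≥0∞) ^ 2) ^ ((1:ℝ)/2)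

/-- Weighted measure realizing `H^{s1,s2}` as an `L²` space on the Fourier side. -/
def Hmeas (s1 s2 : ℝ) : Measure (ℝ × ℝ) :=
  volume.withDensity fun ν => ENNReal.ofReal (jb ν.1 ^ (2 * s1) * jb ν.2 ^ (2 * s2))

/-- Weighted measure realizing `X^{b,s1,s2}` as an `L²` space on the Fourier side. -/
def Xmeas (b s1 s2 : ℝ) : Measure (ℝ × ℝ × ℝ) :=
  volume.withDensity fun p => ENNReal.ofReal (XwE b s1 s2 p.1 p.2)

/-- Mixed space-time Lebesgue norm `L^q_t L^r_{x,y}`. -/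
def mixedNormE (q r : ℝ) (g : ℝ → ℝ × ℝ → ℂ) : ℝ≥0∞ :=
  (∫⁻ t : ℝ, (∫⁻ ν : ℝ × ℝ, (‖g t ν‖₊ : ℝ≥0∞) ^ r) ^ (q / r)) ^ (1 / q)

/-- Resonance function `χ(ξ,ξ₁,η,η₁)`. -/
def chiRes (ξ ξ₁ η η₁ : ℝ) : ℝ :=
  3 * ξ * ξ₁ * (ξ - ξ₁) + (η * ξ₁ - η₁ * ξ) ^ 2 / (ξ * ξ₁ * (ξ - ξ₁))

/-- Membership in the rectangle `D_{1,N} = [N/2,N] × [-6N²,6N²]`. -/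
def inD1 (N ξ η : ℝ) : Prop :=
  ξ ∈ Set.Icc (N / 2) N ∧ η ∈ Set.Icc (-(6 * N ^ 2)) (6 * N ^ 2)

/-- Membership in the rectangle `D_{2,N} = [N,2N] × [√3 N²,(√3+1)N²]`. -/
def inD2 (N ξ η : ℝ) : Prop :=
  ξ ∈ Set.Icc N (2 * N) ∧ η ∈ Set.Icc (Real.sqrt 3 * N ^ 2) ((Real.sqrt 3 + 1) * N ^ 2)

end

/-- Bound on the resonance function on the counterexample frequency set. -/
theorem resonance_bound_counterexample :
    ∃ C : ℝ, 0 < C ∧ ∃ N₀ : ℝ, 0 < N₀ ∧ ∀ N : ℝ, N₀ ≤ N →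
      ∀ ξ η ξ₁ η₁ : ℝ,
        ((inD2 N ξ₁ η₁ ∧ inD1 N (ξ - ξ₁) (η - η₁)) ∨
          (inD1 N ξ₁ η₁ ∧ inD2 N (ξ - ξ₁) (η - η₁))) →
        |chiRes ξ ξ₁ η η₁| ≤ C * N ^ 3 := by
  refine ⟨10000, by norm_num, 1, one_pos, ?_⟩
  intro N hN ξ η ξ₁ η₁ h
  have hN0 : (0:ℝ) < N := lt_of_lt_of_le one_pos hN
  have hs3 : Real.sqrt 3 ≤ 2 := by
    nlinarith [Real.sq_sqrt (by norm_num : (0:ℝ) ≤ 3), Real.sqrt_nonneg 3]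
  have hs3' : (0:ℝ) ≤ Real.sqrt 3 := Real.sqrt_nonneg 3
  -- extract unified bounds
  have hb : (N/2 ≤ ξ₁ ∧ ξ₁ ≤ 2*N) ∧ (N/2 ≤ ξ - ξ₁ ∧ ξ - ξ₁ ≤ 2*N) ∧
      |η₁| ≤ 6*N^2 ∧ |η - η₁| ≤ 6*N^2 := by
    have hN2 : (0:ℝ) ≤ N^2 := sq_nonneg N
    have hD2low : (0:ℝ) ≤ Real.sqrt 3 * N^2 := by positivity
    have hD2up : (Real.sqrt 3 + 1) * N^2 ≤ 6*N^2 :=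
      mul_le_mul_of_nonneg_right (by linarith) hN2
    rcases h with ⟨⟨h1, h2⟩, ⟨h3, h4⟩⟩ | ⟨⟨h1, h2⟩, ⟨h3, h4⟩⟩ <;>
      simp only [Set.mem_Icc] at h1 h2 h3 h4
    · refine ⟨⟨by linarith [h1.1], h1.2⟩, ⟨h3.1, by linarith [h3.2]⟩, ?_, ?_⟩
      · rw [abs_le]; exact ⟨by linarith [h2.1], by linarith [h2.2]⟩
      · rw [abs_le]; exact ⟨h4.1, h4.2⟩
    · refine ⟨⟨h1.1, by linarith [h1.2]⟩, ⟨by linarith [h3.1], h3.2⟩, ?_, ?_⟩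
      · rw [abs_le]; exact ⟨h2.1, h2.2⟩
      · rw [abs_le]; exact ⟨by linarith [h4.1], by linarith [h4.2]⟩
  obtain ⟨⟨ha1, ha2⟩, ⟨hb1, hb2⟩, hc, hd⟩ := hb
  have hη₁ := abs_le.1 hc
  have hη₂ := abs_le.1 hd
  have hξ₁pos : 0 < ξ₁ := by linarith
  have hbpos : 0 < ξ - ξ₁ := by linarith
  have hξpos : 0 < ξ := by linarith
  have hden : 0 < ξ * ξ₁ * (ξ - ξ₁) := by positivity
  have hdenlb : N^3/4 ≤ ξ * ξ₁ * (ξ - ξ₁) := by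
    calc N^3/4 = N * (N/2) * (N/2) := by ring
    _ ≤ ξ * ξ₁ * (ξ - ξ₁) := by gcongr <;> linarith
  unfold chiRes
  have hη : |η| ≤ 12 * N^2 := by
    rw [abs_le]; constructor <;> linarith [hη₁.1, hη₁.2, hη₂.1, hη₂.2]
  have habs1 : |η * ξ₁| ≤ 24 * N^3 := by
    rw [abs_mul]
    calc |η| * |ξ₁| ≤ (12*N^2) * (2*N) := by
          apply mul_le_mul hη _ (abs_nonneg _) (by positivity)
          rw [abs_of_pos hξ₁pos]; exact ha2
    _ = 24 * N^3 := by ring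
  have habs2 : |η₁ * ξ| ≤ 24 * N^3 := by
    rw [abs_mul]
    calc |η₁| * |ξ| ≤ (6*N^2) * (4*N) := by
          apply mul_le_mul hc _ (abs_nonneg _) (by positivity)
          rw [abs_of_pos hξpos]; linarith
    _ = 24 * N^3 := by ring
  have hs : |η * ξ₁ - η₁ * ξ| ≤ 48 * N^3 := by
    calc |η * ξ₁ - η₁ * ξ| ≤ |η * ξ₁| + |η₁ * ξ| := abs_sub _ _
    _ ≤ 48 * N^3 := by linarith
  have hsq : (η * ξ₁ - η₁ * ξ)^2 ≤ (48*N^3)^2 := by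
    rw [← sq_abs]
    exact pow_le_pow_left₀ (abs_nonneg _) hs 2
  have hdiv : (η * ξ₁ - η₁ * ξ)^2 / (ξ * ξ₁ * (ξ - ξ₁)) ≤ 9216 * N^3 := by
    rw [div_le_iff₀ hden]
    calc (η * ξ₁ - η₁ * ξ)^2 ≤ (48*N^3)^2 := hsq
    _ = 9216 * N^3 * (N^3/4) := by ring
    _ ≤ 9216 * N^3 * (ξ * ξ₁ * (ξ - ξ₁)) :=
        mul_le_mul_of_nonneg_left hdenlb (by positivity)
  have h3d : 3 * ξ * ξ₁ * (ξ - ξ₁) ≤ 48 * N^3 := by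
    calc 3 * ξ * ξ₁ * (ξ - ξ₁) ≤ 3 * (4*N) * (2*N) * (2*N) := by
          gcongr <;> linarith
    _ = 48 * N^3 := by ring
  have hnn : 0 ≤ 3 * ξ * ξ₁ * (ξ - ξ₁) + (η * ξ₁ - η₁ * ξ)^2 / (ξ * ξ₁ * (ξ - ξ₁)) := by
    have h1 : 0 ≤ (η * ξ₁ - η₁ * ξ)^2 / (ξ * ξ₁ * (ξ - ξ₁)) := div_nonneg (sq_nonneg _) hden.le
    have h2 : 0 < 3 * ξ * ξ₁ * (ξ - ξ₁) :=
      mul_pos (mul_pos (by linarith : (0:ℝ) < 3 * ξ) hξ₁pos) hbpos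
    linarith
  rw [abs_of_nonneg hnn]
  linarith
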